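/- arXiv:1809.10783 — 3 statements merged into one kernel-verified Lean document; each statement's English description precedes it below -/
import Mathlib

section
/- If A' is a selection basis for A, then Player I has a winning predetermined strategy in G₁(A, B) if and only if Player I has a winning predetermined strategy in G₁(A', B). -/
open Set

variable {α : Type*}

/-- `R` is a reflection of `A`: for every `A₀ ∈ A` there is a choice function `f` on `R`
(`f r ∈ r` for all `r ∈ R`) whose range on `R` belongs to `A` and is contained in `A₀`. -/
def Reflection (R A : Set (Set α)) : Prop :=
  ∀ A₀ ∈ A, ∃ f : Set α → α, (∀ r ∈ R, f r ∈ r) ∧ f '' R ∈ A ∧ f '' R ⊆ A₀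

/-- `A'` is a selection basis for `A`: `A' ⊆ A` and `A'` is coinitial in `A` under `⊆`. -/
def SelBasis (A' A : Set (Set α)) : Prop :=
  A' ⊆ A ∧ ∀ A₀ ∈ A, ∃ A₁ ∈ A', A₁ ⊆ A₀

/-- Player I has a winning predetermined strategy in the selection game on `A` where
Player II wins iff the set of its choices satisfies `W`. -/
def IPreWin (A : Set (Set α)) (W : Set α → Prop) : Prop :=
  ∃ σ : ℕ → Set α, (∀ n, σ n ∈ A) ∧
    ∀ b : ℕ → α, (∀ n, b n ∈ σ n) → ¬ W (Set.range b)

/-- Player II has a winning Markov strategy in the selection game on `A` where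
Player II wins iff the set of its choices satisfies `W`. -/
def IIMarkWin (A : Set (Set α)) (W : Set α → Prop) : Prop :=
  ∃ τ : Set α → ℕ → α, (∀ A₀ ∈ A, ∀ n, τ A₀ n ∈ A₀) ∧
    ∀ a : ℕ → Set α, (∀ n, a n ∈ A) → W (Set.range fun n => τ (a n) n)

/-- Player I has a winning perfect-information strategy in the selection game on `A`
where Player II wins iff the set of its choices satisfies `W`.  The strategy is a
function of the finite sequence of Player II's previous moves. -/
def IWin (A : Set (Set α)) (W : Set α → Prop) : Prop :=
  ∃ σ : List α → Set α, (∀ h, σ h ∈ A) ∧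
    ∀ b : ℕ → α, (∀ n, b n ∈ σ (List.ofFn fun i : Fin n => b i)) →
      ¬ W (Set.range b)

/-- Player II has a winning perfect-information strategy in the selection game on `A`
where Player II wins iff the set of its choices satisfies `W`.  The strategy is a
function of the finite sequence of Player I's moves so far (including the latest). -/
def IIWin (A : Set (Set α)) (W : Set α → Prop) : Prop :=
  ∃ τ : List (Set α) → α,
    ∀ a : ℕ → Set α, (∀ n, a n ∈ A) →
      (∀ n, τ (List.ofFn fun i : Fin (n + 1) => a i) ∈ a n) ∧
      W (Set.range fun n => τ (List.ofFn fun i : Fin (n + 1) => a i))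

theorem stmt5 (A' A B : Set (Set α)) (h : SelBasis A' A) :
    IPreWin A (· ∈ B) ↔ IPreWin A' (· ∈ B) := by
  obtain ⟨hsub, hcoin⟩ := h
  constructor
  · rintro ⟨σ, hσ, hwin⟩
    choose σ' hσ'mem hσ'sub using fun n => hcoin (σ n) (hσ n)
    exact ⟨σ', hσ'mem, fun b hb => hwin b fun n => hσ'sub n (hb n)⟩
  · rintro ⟨σ, hσ, hwin⟩
    exact ⟨σ, fun n => hsub (hσ n), hwin⟩
end

section
/- For the Rothberger game on a topological space X: Player I has a winning predetermined strategy in the Rothberger game G₁(O_X, O_X) if and only if Player II has a winning Markov strategy in the point-open game G₁(P_X, ¬O_X); and Player II has a winning Markov strategy in G₁(O_X, O_X) if and only if Player I has a winning predetermined strategy in G₁(P_X, ¬O_X). -/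
open Set

variable {α : Type*}

/-- The collection of covers of `X` by members of the basis `T`. -/
def OX {X : Type*} (T : Set (Set X)) : Set (Set (Set X)) :=
  {U | U ⊆ T ∧ ⋃₀ U = Set.univ}

/-- The collection of local point-bases `T_{X,x}` for `x ∈ X`. -/
def PX {X : Type*} (T : Set (Set X)) : Set (Set (Set X)) :=
  {r | ∃ x : X, r = {U ∈ T | x ∈ U}}

lemma choice_image_mem_OX {X : Type*} {T : Set (Set X)}
    {g : Set (Set X) → Set X} (hg : ∀ r ∈ PX T, g r ∈ r) : g '' PX T ∈ OX T := by
  constructor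
  · rintro U ⟨r, hr, rfl⟩
    obtain ⟨x, rfl⟩ := hr
    exact (hg _ ⟨x, rfl⟩).1
  · apply Set.eq_univ_of_forall
    intro y
    exact ⟨g {U | U ∈ T ∧ y ∈ U}, ⟨_, ⟨y, rfl⟩, rfl⟩, (hg _ ⟨y, rfl⟩).2⟩

theorem stmt15' {X : Type*} [TopologicalSpace X] (T : Set (Set X))
    (hT : TopologicalSpace.IsTopologicalBasis T) (hne : ∀ U ∈ T, U.Nonempty) :
    (IPreWin (OX T) (· ∈ OX T) ↔ IIMarkWin (PX T) (· ∉ OX T)) ∧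
      (IIMarkWin (OX T) (· ∈ OX T) ↔ IPreWin (PX T) (· ∉ OX T)) := by
  classical
  constructor
  · constructor
    · rintro ⟨σ, hσO, hσwin⟩
      refine ⟨fun r n => if h : (σ n ∩ r).Nonempty then h.choose else ∅, ?_, ?_⟩
      · rintro r ⟨x, rfl⟩ n
        have hx : x ∈ ⋃₀ σ n := by rw [(hσO n).2]; trivial
        obtain ⟨U, hU, hxU⟩ := hx
        have h : (σ n ∩ {U | U ∈ T ∧ x ∈ U}).Nonempty :=
          ⟨U, hU, (hσO n).1 hU, hxU⟩
        simpa [dif_pos h] using h.choose_spec.2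
      · intro a ha
        have hb : ∀ n, (if h : (σ n ∩ a n).Nonempty then h.choose else ∅) ∈ σ n := by
          intro n
          obtain ⟨x, hx⟩ := ha n
          rw [hx]
          have hxx : x ∈ ⋃₀ σ n := by rw [(hσO n).2]; trivial
          obtain ⟨U, hU, hxU⟩ := hxx
          have h : (σ n ∩ {U | U ∈ T ∧ x ∈ U}).Nonempty :=
            ⟨U, hU, (hσO n).1 hU, hxU⟩
          simpa [dif_pos h] using h.choose_spec.1
        exact hσwin _ hb
    · rintro ⟨τ, hτmem, hτwin⟩
      refine ⟨fun n => (fun r => τ r n) '' PX T,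
        fun n => choice_image_mem_OX (fun r hr => hτmem r hr n), ?_⟩
      intro b hb hW
      choose r hr hτr using hb
      have hEq : (fun n => τ (r n) n) = b := funext hτr
      have := hτwin r hr
      rw [hEq] at this
      exact this hW
  · constructor
    · rintro ⟨τ, hτmem, hτwin⟩
      have key : ∀ n : ℕ, ∃ x : X, ∀ U, U ∈ T → x ∈ U → ∃ A₀ ∈ OX T, τ A₀ n = U := by
        intro n
        by_contra hcon
        push_neg at hcon
        choose U hUT hxU hUnot using hcon
        have hA : Set.range U ∈ OX T := by
          constructor
          · rintro V ⟨x, rfl⟩; exact hUT x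
          · apply Set.eq_univ_of_forall
            intro y
            exact ⟨U y, ⟨y, rfl⟩, hxU y⟩
        obtain ⟨x, hx⟩ := hτmem _ hA n
        exact hUnot x _ hA hx.symm
      choose x hx using key
      refine ⟨fun n => {U | U ∈ T ∧ x n ∈ U}, fun n => ⟨x n, rfl⟩, ?_⟩
      intro b hb
      rw [not_not]
      choose A hA hAτ using fun n => hx n (b n) (hb n).1 (hb n).2
      have := hτwin A hA
      have hEq : (fun n => τ (A n) n) = b := funext hAτ
      rwa [hEq] at this
    · rintro ⟨σ, hσP, hσwin⟩
      choose x hxσ using hσP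
      refine ⟨fun A₀ n => if h : (A₀ ∩ σ n).Nonempty then h.choose else ∅, ?_, ?_⟩
      · intro A₀ hA₀ n
        have hxx : x n ∈ ⋃₀ A₀ := by rw [hA₀.2]; trivial
        obtain ⟨U, hU, hxU⟩ := hxx
        have h : (A₀ ∩ σ n).Nonempty := ⟨U, hU, by rw [hxσ n]; exact ⟨hA₀.1 hU, hxU⟩⟩
        simpa [dif_pos h] using h.choose_spec.1
      · intro a ha
        have hb : ∀ n, (if h : (a n ∩ σ n).Nonempty then h.choose else ∅) ∈ σ n := by
          intro n
          have hxx : x n ∈ ⋃₀ a n := by rw [(ha n).2]; trivial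
          obtain ⟨U, hU, hxU⟩ := hxx
          have h : (a n ∩ σ n).Nonempty := ⟨U, hU, by rw [hxσ n]; exact ⟨(ha n).1 hU, hxU⟩⟩
          simpa [dif_pos h] using h.choose_spec.2
        exact not_not.mp (hσwin _ hb)

theorem stmt15 {X : Type*} [TopologicalSpace X] (T : Set (Set X))
    (hT : TopologicalSpace.IsTopologicalBasis T) (hne : ∀ U ∈ T, U.Nonempty) :
    (IPreWin (OX T) (· ∈ OX T) ↔ IIMarkWin (PX T) (· ∉ OX T)) ∧
      (IIMarkWin (OX T) (· ∈ OX T) ↔ IPreWin (PX T) (· ∉ OX T)) := stmt15' T hT hne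
end

section
/- For the Rothberger game on a topological space X: Player I has a winning perfect-information strategy in G₁(O_X, O_X) if and only if Player II has a winning perfect-information strategy in the point-open game G₁(P_X, ¬O_X); and Player II has a winning strategy in G₁(O_X, O_X) if and only if Player I has a winning strategy in G₁(P_X, ¬O_X). -/
set_option linter.unusedSectionVars false


open Set

variable {α : Type*}

section Aux
variable {β γ : Type*}

def gbuildAux (step : List γ → β → γ) : List β → List γ
  | [] => []
  | a :: rest => step (gbuildAux step rest).reverse a :: gbuildAux step rest

def gbuild (step : List γ → β → γ) (l : List β) : List γ :=
  (gbuildAux step l.reverse).reverse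

theorem gbuild_concat (step : List γ → β → γ) (l : List β) (a : β) :
    gbuild step (l ++ [a]) = gbuild step l ++ [step (gbuild step l) a] := by
  simp [gbuild, gbuildAux]

theorem gbuild_all (step : List γ → β → γ) (P : γ → Prop)
    (hstep : ∀ h a, P (step h a)) : ∀ l : List β, ∀ x ∈ gbuild step l, P x := by
  intro l
  induction l using List.reverseRecOn with
  | nil => simp [gbuild, gbuildAux]
  | append_singleton l a ih =>
      rw [gbuild_concat]; intro x hx
      rcases List.mem_append.1 hx with h | h
      · exact ih x h
      · simp only [List.mem_singleton] at h; subst h; exact hstep _ _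

theorem ofFn_concat (f : ℕ → β) (n : ℕ) :
    (List.ofFn fun i : Fin (n+1) => f i) = (List.ofFn fun i : Fin n => f i) ++ [f n] := by
  rw [List.ofFn_succ']
  simp [List.concat_eq_append]

theorem gbuild_ofFn (step : List γ → β → γ) (a : ℕ → β) (b : ℕ → γ)
    (hb : ∀ n, b n = step (gbuild step (List.ofFn fun i : Fin n => a i)) (a n)) :
    ∀ n, gbuild step (List.ofFn fun i : Fin n => a i) = List.ofFn fun i : Fin n => b i := by
  intro n
  induction n with
  | zero => rfl
  | succ n ih =>
      rw [ofFn_concat a n, gbuild_concat, ofFn_concat b n, ← hb n, ih]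

theorem ofFn_getD (l : List β) (d : β) (n : ℕ) (hn : n = l.length) :
    (List.ofFn fun i : Fin n => l.getD i d) = l := by
  subst hn
  apply List.ext_getElem (by simp)
  intro i h1 h2
  simp [List.getD_eq_getElem]

end Aux
open Set
section Main
open scoped Classical
variable {X : Type*} [TopologicalSpace X] (T : Set (Set X))

/-- pick an element of a cover containing a point -/
noncomputable def pickSet (𝒰 : Set (Set X)) (x : X) : Set X :=
  if hc : ∃ V ∈ 𝒰, x ∈ V then hc.choose else ∅

theorem pickSet_spec {𝒰 : Set (Set X)} {x : X} (hc : ∃ V ∈ 𝒰, x ∈ V) :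
    pickSet 𝒰 x ∈ 𝒰 ∧ x ∈ pickSet 𝒰 x := by
  unfold pickSet; rw [dif_pos hc]; exact hc.choose_spec

theorem cover_pick {𝒰 : Set (Set X)} (h𝒰 : 𝒰 ∈ OX T) (x : X) : ∃ V ∈ 𝒰, x ∈ V := by
  have : x ∈ ⋃₀ 𝒰 := h𝒰.2 ▸ mem_univ x
  simpa using this

noncomputable def ptOf [Nonempty X] (r : Set (Set X)) : X :=
  if h : ∃ x : X, r = {U ∈ T | x ∈ U} then h.choose else Classical.arbitrary X

theorem ptOf_spec [Nonempty X] {r : Set (Set X)} (hr : r ∈ PX T) :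
    r = {U ∈ T | ptOf T r ∈ U} := by
  have hr' : ∃ x : X, r = {U ∈ T | x ∈ U} := hr
  unfold ptOf; rw [dif_pos hr']; exact hr'.choose_spec


theorem II_leg {α : Type*} {A : Set (Set α)} (τ : List (Set α) → α) {pad : Set α} (hpad : pad ∈ A)
    (hτ : ∀ a : ℕ → Set α, (∀ n, a n ∈ A) → ∀ n, τ (List.ofFn fun i : Fin (n + 1) => a i) ∈ a n)
    (h : List (Set α)) (hh : ∀ r ∈ h, r ∈ A) {r : Set α} (hr : r ∈ A) :
    τ (h ++ [r]) ∈ r := by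
  have haA : ∀ n, (h ++ [r]).getD n pad ∈ A := by
    intro n
    by_cases hn : n < (h ++ [r]).length
    · rw [List.getD_eq_getElem _ _ hn]
      have hmem := List.getElem_mem (l := h ++ [r]) (n := n) hn
      rcases List.mem_append.1 hmem with h1 | h1
      · exact hh _ h1
      · simp only [List.mem_singleton] at h1; rw [h1]; exact hr
    · rw [List.getD_eq_default _ _ (le_of_not_gt hn)]
      exact hpad
  have k := hτ (fun n => (h ++ [r]).getD n pad) haA h.length
  beta_reduce at k
  have h1 : (h ++ [r]).getD h.length pad = r := by
    have hlt : h.length < (h ++ [r]).length := by simp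
    rw [List.getD_eq_getElem _ _ hlt]
    simp
  have h2 : (List.ofFn fun i : Fin (h.length + 1) => (h ++ [r]).getD i pad) = h ++ [r] :=
    ofFn_getD (h ++ [r]) pad (h.length + 1) (by simp)
  rwa [h2, h1] at k

theorem L1 [Nonempty X] : IWin (OX T) (· ∈ OX T) → IIWin (PX T) (· ∉ OX T) := by
  rintro ⟨σ, hσA, hσW⟩
  classical
  set step : List (Set X) → Set (Set X) → Set X :=
    fun h r => pickSet (σ h) (ptOf T r) with hstep
  refine ⟨fun l => (gbuild step l).getLastD ∅, ?_⟩
  intro a ha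
  set b : ℕ → Set X :=
    fun n => step (gbuild step (List.ofFn fun i : Fin n => a i)) (a n) with hbdef
  have hH := gbuild_ofFn step a b (fun n => rfl)
  have hτb : ∀ n, (gbuild step (List.ofFn fun i : Fin (n+1) => a i)).getLastD ∅ = b n := by
    intro n
    rw [ofFn_concat a n, gbuild_concat]
    simp
    rfl
  have hspec : ∀ n, b n ∈ σ (List.ofFn fun i : Fin n => b i) ∧
      ptOf T (a n) ∈ b n := by
    intro n
    have h := pickSet_spec
      (𝒰 := σ (gbuild step (List.ofFn fun i : Fin n => a i))) (x := ptOf T (a n))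
      (cover_pick T (hσA _) (ptOf T (a n)))
    rw [← hH n]
    exact h
  constructor
  · intro n
    show (gbuild step (List.ofFn fun i : Fin (n+1) => a i)).getLastD ∅ ∈ a n
    rw [hτb n, ptOf_spec T (ha n)]
    exact ⟨(hσA _).1 (hspec n).1, (hspec n).2⟩
  · show (Set.range fun n => (gbuild step (List.ofFn fun i : Fin (n+1) => a i)).getLastD ∅) ∉ OX T
    have hfun : (fun n => (gbuild step (List.ofFn fun i : Fin (n+1) => a i)).getLastD ∅) = b :=
      funext hτb
    rw [hfun]
    exact hσW b (fun n => (hspec n).1)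

theorem L4 [Nonempty X] : IWin (PX T) (· ∉ OX T) → IIWin (OX T) (· ∈ OX T) := by
  rintro ⟨σ, hσA, hσW⟩
  classical
  set step : List (Set X) → Set (Set X) → Set X :=
    fun h 𝒰 => pickSet 𝒰 (ptOf T (σ h)) with hstep
  refine ⟨fun l => (gbuild step l).getLastD ∅, ?_⟩
  intro a ha
  set b : ℕ → Set X :=
    fun n => step (gbuild step (List.ofFn fun i : Fin n => a i)) (a n) with hbdef
  have hH := gbuild_ofFn step a b (fun n => rfl)
  have hτb : ∀ n, (gbuild step (List.ofFn fun i : Fin (n+1) => a i)).getLastD ∅ = b n := by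
    intro n
    rw [ofFn_concat a n, gbuild_concat]
    simp
    rfl
  have hspec : ∀ n, b n ∈ a n ∧ ptOf T (σ (List.ofFn fun i : Fin n => b i)) ∈ b n := by
    intro n
    have h := pickSet_spec (𝒰 := a n)
      (x := ptOf T (σ (gbuild step (List.ofFn fun i : Fin n => a i))))
      (cover_pick T (ha n) _)
    rw [← hH n]
    exact h
  have hbσ : ∀ n, b n ∈ σ (List.ofFn fun i : Fin n => b i) := by
    intro n
    rw [ptOf_spec T (hσA (List.ofFn fun i : Fin n => b i))]
    exact ⟨(ha n).1 (hspec n).1, (hspec n).2⟩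
  constructor
  · intro n
    show (gbuild step (List.ofFn fun i : Fin (n+1) => a i)).getLastD ∅ ∈ a n
    rw [hτb n]; exact (hspec n).1
  · show (Set.range fun n => (gbuild step (List.ofFn fun i : Fin (n+1) => a i)).getLastD ∅) ∈ OX T
    have hfun : (fun n => (gbuild step (List.ofFn fun i : Fin (n+1) => a i)).getLastD ∅) = b :=
      funext hτb
    rw [hfun]
    exact not_not.1 (hσW b hbσ)

theorem L2 [Nonempty X] : IIWin (PX T) (· ∉ OX T) → IWin (OX T) (· ∈ OX T) := by
  rintro ⟨τ, hτ⟩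
  classical
  have hpad : {U ∈ T | (Classical.arbitrary X : X) ∈ U} ∈ PX T := ⟨_, rfl⟩
  have hleg := II_leg τ hpad (fun a ha => (hτ a ha).1)
  set step : List (Set (Set X)) → Set X → Set (Set X) := fun ph V =>
    if hc : ∃ x : X, τ (ph ++ [{U ∈ T | x ∈ U}]) = V then {U ∈ T | hc.choose ∈ U}
    else {U ∈ T | (Classical.arbitrary X : X) ∈ U} with hstep
  have hstepP : ∀ ph V, step ph V ∈ PX T := by
    intro ph V
    rw [hstep]; dsimp only; split
    · exact ⟨_, rfl⟩
    · exact ⟨_, rfl⟩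
  have hstep_spec : ∀ ph V, (∃ x : X, τ (ph ++ [{U ∈ T | x ∈ U}]) = V) →
      τ (ph ++ [step ph V]) = V := by
    intro ph V hc
    rw [hstep]; dsimp only; rw [dif_pos hc]
    exact hc.choose_spec
  have hbuildP : ∀ l, ∀ r ∈ gbuild step l, r ∈ PX T := gbuild_all step _ hstepP
  refine ⟨fun hist => {V | ∃ x : X, V = τ (gbuild step hist ++ [{U ∈ T | x ∈ U}])}, ?_, ?_⟩
  · intro hist
    constructor
    · rintro V ⟨x, rfl⟩
      exact (hleg _ (hbuildP hist) ⟨x, rfl⟩).1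
    · rw [Set.eq_univ_iff_forall]
      intro y
      exact Set.mem_sUnion.2 ⟨τ (gbuild step hist ++ [{U ∈ T | y ∈ U}]), ⟨y, rfl⟩,
        (hleg _ (hbuildP hist) ⟨y, rfl⟩).2⟩
  · intro b hb
    set a : ℕ → Set (Set X) :=
      fun n => step (gbuild step (List.ofFn fun i : Fin n => b i)) (b n) with hadef
    have hH := gbuild_ofFn step b a (fun n => rfl)
    have haP : ∀ n, a n ∈ PX T := fun n => hstepP _ _
    have hkey : ∀ n, τ (List.ofFn fun i : Fin (n+1) => a i) = b n := by
      intro n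
      obtain ⟨x, hx⟩ := hb n
      have hc : ∃ x : X,
          τ ((gbuild step (List.ofFn fun i : Fin n => b i)) ++ [{U ∈ T | x ∈ U}]) = b n :=
        ⟨x, hx.symm⟩
      have hs := hstep_spec _ _ hc
      rw [ofFn_concat a n, ← hH n]
      exact hs
    have h2 := (hτ a haP).2
    have hfun : (fun n => τ (List.ofFn fun i : Fin (n+1) => a i)) = b := funext hkey
    show ¬ (Set.range b ∈ OX T)
    rw [← hfun]
    exact h2

theorem L3 [Nonempty X] (hT : TopologicalSpace.IsTopologicalBasis T) :
    IIWin (OX T) (· ∈ OX T) → IWin (PX T) (· ∉ OX T) := by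
  rintro ⟨τ, hτ⟩
  classical
  have hTO : T ∈ OX T := ⟨subset_rfl, hT.sUnion_eq⟩
  have hleg := II_leg τ hTO (fun a ha => (hτ a ha).1)
  have hclaim : ∀ h : List (Set (Set X)), (∀ 𝒰 ∈ h, 𝒰 ∈ OX T) →
      ∃ x : X, ∀ V ∈ T, x ∈ V → ∃ 𝒰 ∈ OX T, τ (h ++ [𝒰]) ⊆ V := by
    intro h hh
    by_contra hcon
    push_neg at hcon
    set 𝒰₀ : Set (Set X) := {V | V ∈ T ∧ ∀ 𝒰 ∈ OX T, ¬ τ (h ++ [𝒰]) ⊆ V} with h𝒰₀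
    have h𝒰₀O : 𝒰₀ ∈ OX T := by
      constructor
      · intro V hV; exact hV.1
      · rw [Set.eq_univ_iff_forall]; intro y
        obtain ⟨V, hVT, hyV, hprop⟩ := hcon y
        exact Set.mem_sUnion.2 ⟨V, ⟨hVT, hprop⟩, hyV⟩
    have hmem := hleg h hh h𝒰₀O
    exact hmem.2 𝒰₀ h𝒰₀O subset_rfl
  have hx : ∀ h : List (Set (Set X)), ∃ x : X, (∀ 𝒰 ∈ h, 𝒰 ∈ OX T) →
      ∀ V ∈ T, x ∈ V → ∃ 𝒰 ∈ OX T, τ (h ++ [𝒰]) ⊆ V := by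
    intro h
    by_cases hh : ∀ 𝒰 ∈ h, 𝒰 ∈ OX T
    · obtain ⟨x, hx⟩ := hclaim h hh; exact ⟨x, fun _ => hx⟩
    · exact ⟨Classical.arbitrary X, fun h' => absurd h' hh⟩
  choose xh hxh using hx
  set step : List (Set (Set X)) → Set X → Set (Set X) := fun ph V =>
    if hc : ∃ 𝒰 ∈ OX T, τ (ph ++ [𝒰]) ⊆ V then hc.choose else T with hstep
  have hstepO : ∀ ph V, step ph V ∈ OX T := by
    intro ph V; rw [hstep]; dsimp only; split
    · next hc => exact hc.choose_spec.1
    · exact hTO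
  have hstep_spec : ∀ ph V, (∃ 𝒰 ∈ OX T, τ (ph ++ [𝒰]) ⊆ V) →
      τ (ph ++ [step ph V]) ⊆ V := by
    intro ph V hc; rw [hstep]; dsimp only; rw [dif_pos hc]; exact hc.choose_spec.2
  have hbuildO : ∀ l, ∀ 𝒰 ∈ gbuild step l, 𝒰 ∈ OX T := gbuild_all step _ hstepO
  refine ⟨fun hist => {U ∈ T | xh (gbuild step hist) ∈ U}, fun hist => ⟨_, rfl⟩, ?_⟩
  intro b hb
  set a : ℕ → Set (Set X) :=
    fun n => step (gbuild step (List.ofFn fun i : Fin n => b i)) (b n) with hadef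
  have hH := gbuild_ofFn step b a (fun n => rfl)
  have haO : ∀ n, a n ∈ OX T := fun n => hstepO _ _
  have hsub : ∀ n, τ (List.ofFn fun i : Fin (n+1) => a i) ⊆ b n := by
    intro n
    have hbn := hb n
    have hc := hxh (gbuild step (List.ofFn fun i : Fin n => b i))
      (hbuildO _) (b n) hbn.1 hbn.2
    have hs := hstep_spec _ _ hc
    rw [ofFn_concat a n, ← hH n]
    exact hs
  have hres := (hτ a haO).2
  show ¬ (Set.range b ∉ OX T)
  rw [not_not]
  constructor
  · rintro V ⟨n, rfl⟩; exact (hb n).1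
  · rw [Set.eq_univ_iff_forall]; intro y
    have hy : y ∈ ⋃₀ Set.range (fun n => τ (List.ofFn fun i : Fin (n+1) => a i)) := by
      have := hres.2
      rw [this]; trivial
    obtain ⟨t, ⟨n, rfl⟩, hyt⟩ := hy
    exact Set.mem_sUnion.2 ⟨b n, ⟨n, rfl⟩, hsub n hyt⟩

end Main

theorem stmt16 {X : Type*} [TopologicalSpace X] (T : Set (Set X))
    (hT : TopologicalSpace.IsTopologicalBasis T) (hne : ∀ U ∈ T, U.Nonempty) :
    (IWin (OX T) (· ∈ OX T) ↔ IIWin (PX T) (· ∉ OX T)) ∧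
      (IIWin (OX T) (· ∈ OX T) ↔ IWin (PX T) (· ∉ OX T)) := by
  rcases isEmpty_or_nonempty X with hX | hX
  · have hPX : PX T = ∅ := by
      rw [Set.eq_empty_iff_forall_notMem]
      rintro r ⟨x, -⟩
      exact IsEmpty.false x
    have hOX : (∅ : Set (Set X)) ∈ OX T := by
      refine ⟨Set.empty_subset _, ?_⟩
      rw [Set.sUnion_empty]
      exact (Set.univ_eq_empty_iff.2 hX).symm
    constructor
    · constructor
      · intro _
        exact ⟨fun _ => (∅ : Set X), by
          intro a ha
          exact absurd (ha 0) (by rw [hPX]; exact Set.notMem_empty _)⟩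
      · intro _
        refine ⟨fun _ => ∅, fun _ => hOX, ?_⟩
        intro b hb
        exact absurd (hb 0) (Set.notMem_empty _)
    · constructor
      · rintro ⟨τ, hτ⟩
        have := (hτ (fun _ => ∅) (fun _ => hOX)).1 0
        exact absurd this (Set.notMem_empty _)
      · rintro ⟨σ, hσA, -⟩
        have := hσA []
        rw [hPX] at this
        exact absurd this (Set.notMem_empty _)
  · exact ⟨⟨L1 T, L2 T⟩, ⟨L3 T hT, L4 T⟩⟩
end
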